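/- Let d ≥ 1 and δ > 1. If X is a set of n points in ℝ^d such that the distance between any two distinct points of X is either 1 or δ, and both distances 1 and δ occur between points of X, and n > 2d + 4, then (1 + δ²)/(δ² − 1) is an odd positive integer; that is, there exists an odd integer k ≥ 1 with (1 + δ²)/(δ² − 1) = k. -/

import Mathlib

open Polynomial Matrix

/- Auxiliary lemma: characteristic polynomial is invariant under conjugation. -/
theorem LRS.charpoly_conj' {ι : Type*} [Fintype ι] [DecidableEq ι] (U A V : Matrix ι ι ℝ)
    (hUV : U * V = 1) (hVU : V * U = 1) : (U * A * V).charpoly = A.charpoly := by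
  have hcomm : Commute (scalar ι (X : ℝ[X])) (U.map C) :=
    scalar_commute _ (fun r => Commute.all _ _) _
  have hmapUV : U.map C * V.map C = (1 : Matrix ι ι ℝ[X]) := by
    rw [← RingHom.mapMatrix_apply, ← RingHom.mapMatrix_apply, ← _root_.map_mul, hUV]; simp
  have hmapVU : V.map C * U.map C = (1 : Matrix ι ι ℝ[X]) := by
    rw [← RingHom.mapMatrix_apply, ← RingHom.mapMatrix_apply, ← _root_.map_mul, hVU]; simp
  have key : charmatrix (U * A * V) = U.map C * charmatrix A * V.map C := by
    unfold charmatrix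
    rw [Matrix.mul_sub, Matrix.sub_mul]
    congr 1
    · rw [← hcomm.eq, mul_assoc, hmapUV, mul_one]
    · rw [RingHom.mapMatrix_apply, RingHom.mapMatrix_apply, ← Matrix.map_mul, ← Matrix.map_mul]
  unfold Matrix.charpoly
  rw [key, det_mul, det_mul, mul_comm, ← mul_assoc, ← det_mul, hmapVU]
  simp

/- Auxiliary lemma: characteristic polynomial of a diagonal matrix. -/
theorem LRS.charpoly_diag' {ι : Type*} [Fintype ι] [DecidableEq ι] (μ : ι → ℝ) :
    (diagonal μ).charpoly = ∏ i, (X - C (μ i)) := by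
  have : charmatrix (diagonal μ) = diagonal (fun i => (X : ℝ[X]) - C (μ i)) := by
    ext i j
    by_cases h : i = j
    · subst h; simp [charmatrix_apply_eq]
    · simp [charmatrix_apply_ne _ _ _ h, diagonal_apply_ne _ h, diagonal_apply_ne', h]
  rw [Matrix.charpoly, this, det_diagonal]

/- Auxiliary lemma: charpoly of a shift by a scalar matrix. -/
theorem LRS.charpoly_add_smul_one {ι : Type*} [Fintype ι] [DecidableEq ι]
    (A : Matrix ι ι ℝ) (c : ℝ) :
    (A + c • (1 : Matrix ι ι ℝ)).charpoly = A.charpoly.comp (X - C c) := by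
  have key : charmatrix (A + c • (1 : Matrix ι ι ℝ))
      = (charmatrix A).map (eval₂RingHom C (X - C c)) := by
    ext i j
    by_cases h : i = j
    · subst h
      simp [charmatrix_apply_eq, Matrix.one_apply, Matrix.add_apply, Matrix.smul_apply]
      ring
    · simp [charmatrix_apply_ne _ _ _ h, Matrix.add_apply, Matrix.smul_apply,
        Matrix.one_apply_ne h]
  rw [Matrix.charpoly, key, ← RingHom.mapMatrix_apply, ← RingHom.map_det]
  rfl

/- Auxiliary lemma: the root multiplicity over `ℝ` times the degree of the minimal
polynomial bounds the degree of a rational polynomial. -/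
theorem LRS.rm_minpoly_le (α : ℝ) (hα : IsIntegral ℚ α) :
    ∀ N : ℕ, ∀ P : ℚ[X], P ≠ 0 → P.natDegree ≤ N →
      (P.map (algebraMap ℚ ℝ)).rootMultiplicity α * (minpoly ℚ α).natDegree ≤ P.natDegree := by
  intro N
  induction N with
  | zero =>
    intro P hP hdeg
    have h0 : P.natDegree = 0 := Nat.le_zero.mp hdeg
    have : ¬ (P.map (algebraMap ℚ ℝ)).IsRoot α := by
      intro hroot
      have hC : P = C (P.coeff 0) := Polynomial.eq_C_of_natDegree_eq_zero h0
      rw [hC, Polynomial.map_C, Polynomial.IsRoot, Polynomial.eval_C] at hroot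
      have : P.coeff 0 = 0 := (algebraMap ℚ ℝ).injective (by simpa using hroot)
      exact hP (by rw [hC, this, map_zero])
    rw [rootMultiplicity_eq_zero this]
    simp
  | succ N ih =>
    intro P hP hdeg
    by_cases hroot : (P.map (algebraMap ℚ ℝ)).IsRoot α
    · have haev : Polynomial.aeval α P = 0 := by
        rwa [Polynomial.aeval_def, ← Polynomial.eval_map]
      obtain ⟨P', hP'⟩ := minpoly.dvd ℚ α haev
      have hμ0 : minpoly ℚ α ≠ 0 := minpoly.ne_zero hα
      have hP'0 : P' ≠ 0 := by rintro rfl; simp at hP'; exact hP hP'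
      have hμdeg : 0 < (minpoly ℚ α).natDegree := minpoly.natDegree_pos hα
      have hdegsum : P.natDegree = (minpoly ℚ α).natDegree + P'.natDegree := by
        rw [hP', Polynomial.natDegree_mul hμ0 hP'0]
      have hP'deg : P'.natDegree ≤ N := by omega
      have hmapmul : P.map (algebraMap ℚ ℝ)
          = (minpoly ℚ α).map (algebraMap ℚ ℝ) * P'.map (algebraMap ℚ ℝ) := by
        rw [hP', Polynomial.map_mul]
      have hmapne : (minpoly ℚ α).map (algebraMap ℚ ℝ) * P'.map (algebraMap ℚ ℝ) ≠ 0 := by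
        rw [← hmapmul]
        exact (Polynomial.map_ne_zero_iff (algebraMap ℚ ℝ).injective).mpr hP
      have hsep : ((minpoly ℚ α).map (algebraMap ℚ ℝ)).Separable :=
        ((minpoly.irreducible hα).separable).map
      have hsq : Squarefree ((minpoly ℚ α).map (algebraMap ℚ ℝ)) := hsep.squarefree
      have hrm1 : ((minpoly ℚ α).map (algebraMap ℚ ℝ)).rootMultiplicity α = 1 := by
        have hμmne : (minpoly ℚ α).map (algebraMap ℚ ℝ) ≠ 0 :=
          (Polynomial.map_ne_zero_iff (algebraMap ℚ ℝ).injective).mpr hμ0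
        have hge : 0 < ((minpoly ℚ α).map (algebraMap ℚ ℝ)).rootMultiplicity α := by
          rw [rootMultiplicity_pos hμmne, Polynomial.IsRoot, Polynomial.eval_map,
            ← Polynomial.aeval_def, minpoly.aeval]
        have hle : ((minpoly ℚ α).map (algebraMap ℚ ℝ)).rootMultiplicity α ≤ 1 := by
          by_contra hgt
          push_neg at hgt
          have hdvd : (X - C α) ^ 2 ∣ (minpoly ℚ α).map (algebraMap ℚ ℝ) :=
            dvd_trans (pow_dvd_pow _ hgt) (Polynomial.pow_rootMultiplicity_dvd _ _)
          have : IsUnit (X - C α) := hsq (X - C α) (by rw [← sq]; exact hdvd)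
          exact (Polynomial.not_isUnit_X_sub_C α) this
        omega
      rw [hmapmul, Polynomial.rootMultiplicity_mul hmapne, hrm1, hdegsum, add_mul, one_mul]
      have := ih P' hP'0 hP'deg
      omega
    · rw [rootMultiplicity_eq_zero hroot]
      simp

/-- for a two-distance set in `ℝ^d` with distances `1, δ` in which
both distances occur, if `n > 2d + 4` then `(1+δ²)/(δ²-1)` is an odd positive integer. -/
theorem stmt4 (d : ℕ) (hd : 1 ≤ d) (δ : ℝ) (hδ : 1 < δ)
    (n : ℕ) (X : Finset (EuclideanSpace ℝ (Fin d))) (hcard : X.card = n)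
    (htwo : ∀ p ∈ X, ∀ q ∈ X, p ≠ q → dist p q = 1 ∨ dist p q = δ)
    (hocc1 : ∃ p ∈ X, ∃ q ∈ X, dist p q = 1)
    (hoccδ : ∃ p ∈ X, ∃ q ∈ X, dist p q = δ)
    (hn : 2 * d + 4 < n) :
    ∃ k : ℤ, Odd k ∧ 1 ≤ k ∧ (1 + δ ^ 2) / (δ ^ 2 - 1) = (k : ℝ) := by
  classical
  let E := EuclideanSpace ℝ (Fin d)
  let ι := {x // x ∈ X}
  have hcardι : Fintype.card ι = n := by rw [Fintype.card_coe, hcard]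
  have hδ2 : (0:ℝ) < δ ^ 2 - 1 := by nlinarith
  have hc0 : (δ:ℝ) ^ 2 - 1 ≠ 0 := ne_of_gt hδ2
  set k : ℝ := δ ^ 2 / (δ ^ 2 - 1) with hk
  -- squared norm
  set sq : E → ℝ := fun p => ∑ i, p i ^ 2 with hsq
  have hdist : ∀ p q : E, dist p q ^ 2 = sq p - 2 * (∑ i, p i * q i) + sq q := by
    intro p q
    have h1 : dist p q ^ 2 = ∑ i, (p i - q i) ^ 2 := by
      rw [EuclideanSpace.dist_eq, Real.sq_sqrt (by positivity)]
      congr 1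
      funext i
      rw [Real.dist_eq, sq_abs]
    rw [h1, hsq]
    simp only [sub_sq]
    rw [Finset.sum_add_distrib, Finset.sum_sub_distrib, Finset.mul_sum]
    ring_nf
  -- the key matrix
  set D : Matrix ι ι ℝ := fun p q => (δ ^ 2 - dist (p : E) (q : E) ^ 2) / (δ ^ 2 - 1) with hD
  -- rank bound : D factors through d+2 columns
  have hrankD : D.rank ≤ d + 2 := by
    set P : Matrix ι (Fin d ⊕ Fin 2) ℝ := fun p j =>
      Sum.elim (fun i => 2 * (p : E) i / (δ ^ 2 - 1))
        (fun t => if t = 0 then (δ ^ 2 - sq (p : E)) / (δ ^ 2 - 1) else -1 / (δ ^ 2 - 1)) j with hP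
    set Q : Matrix (Fin d ⊕ Fin 2) ι ℝ := fun j q =>
      Sum.elim (fun i => (q : E) i) (fun t => if t = 0 then 1 else sq (q : E)) j with hQ
    have hfact : D = P * Q := by
      ext p q
      rw [Matrix.mul_apply, Fintype.sum_sum_type]
      simp only [hP, hQ, Sum.elim_inl, Sum.elim_inr]
      rw [Fin.sum_univ_two]
      simp only [if_pos rfl, if_neg (by decide : (1 : Fin 2) ≠ 0)]
      simp only [hD]
      rw [hdist (p : E) (q : E)]
      have hsum : ∑ i, 2 * (p : E) i / (δ ^ 2 - 1) * (q : E) i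
          = (2 * ∑ i, (p : E) i * (q : E) i) / (δ ^ 2 - 1) := by
        rw [Finset.mul_sum, Finset.sum_div]
        congr 1
        funext i
        ring
      rw [hsum]
      simp only [eq_self_iff_true, if_true]
      field_simp
      ring
    calc D.rank = (P * Q).rank := by rw [hfact]
      _ ≤ P.rank := Matrix.rank_mul_le_left P Q
      _ ≤ Fintype.card (Fin d ⊕ Fin 2) := Matrix.rank_le_card_width P
      _ = d + 2 := by simp
  -- integer matrix B with D = B + k • 1
  set B : Matrix ι ι ℤ := fun p q =>
    if p = q then 0 else if dist (p : E) (q : E) = 1 then 1 else 0 with hB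
  have hDB : D = B.map (Int.cast : ℤ → ℝ) + k • (1 : Matrix ι ι ℝ) := by
    ext p q
    by_cases hpq : p = q
    · subst hpq
      simp only [hD, hB, Matrix.add_apply, Matrix.map_apply, if_pos rfl, Int.cast_zero,
        Matrix.smul_apply, Matrix.one_apply_eq, smul_eq_mul, mul_one, zero_add, dist_self, hk]
      norm_num
      show ((if p = p then 0 else if dist (p : E) (p : E) = 1 then 1 else 0 : ℤ) : ℝ) = 0
      simp
    · have hne : (p : E) ≠ (q : E) := fun h => hpq (Subtype.ext h)
      rcases htwo (p : E) p.2 (q : E) q.2 hne with h1 | h2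
      · simp only [hD, hB, Matrix.add_apply, Matrix.map_apply, if_neg hpq, if_pos h1,
          Int.cast_one, Matrix.smul_apply, Matrix.one_apply_ne hpq, smul_eq_mul, mul_zero,
          add_zero, h1, one_pow]
        field_simp
        change _ = ((Int.cast : ℤ → ℝ) _)
        simp [hpq, h1]
      · have h1ne : dist (p : E) (q : E) ≠ 1 := by rw [h2]; exact ne_of_gt hδ
        simp only [hD, hB, Matrix.add_apply, Matrix.map_apply, if_neg hpq, if_neg h1ne,
          Int.cast_zero, Matrix.smul_apply, Matrix.one_apply_ne hpq, smul_eq_mul, mul_zero,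
          add_zero]
        rw [h2]
        simp
        show (0 : ℝ) = ((if p = q then 0 else if dist (p : E) (q : E) = 1 then 1 else 0 : ℤ) : ℝ)
        simp [hpq, h1ne]
  -- D is symmetric hence hermitian
  have hHerm : D.IsHermitian := by
    unfold Matrix.IsHermitian
    ext p q
    rw [Matrix.conjTranspose_apply]
    simp only [hD, star_trivial]
    rw [dist_comm]
  set μ : ι → ℝ := hHerm.eigenvalues with hμ
  set m : ℕ := Fintype.card {i // μ i = 0} with hm
  have hmn : n - (d + 2) ≤ m ∧ m ≤ n := by
    have h1 : D.rank = Fintype.card {i // μ i ≠ 0} := hHerm.rank_eq_card_non_zero_eigs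
    have h2 : Fintype.card {i // μ i ≠ 0} = Fintype.card ι - m := by
      simp only [ne_eq]
      rw [Fintype.card_subtype_compl]
    have h3 : m ≤ Fintype.card ι := Fintype.card_subtype_le _
    rw [hcardι] at h2 h3
    constructor
    · omega
    · exact h3
  -- charpoly of D as product of eigenvalue factors
  have hcharD : D.charpoly = ∏ i, (Polynomial.X - C (μ i)) := by
    have hspec := hHerm.spectral_theorem
    have hofReal : (RCLike.ofReal ∘ μ : ι → ℝ) = μ := by
      funext i; simp [RCLike.ofReal]
    rw [hofReal] at hspec
    set U : Matrix ι ι ℝ := (hHerm.eigenvectorUnitary : Matrix ι ι ℝ)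
    have hUV : U * star U = 1 := Matrix.mem_unitaryGroup_iff.mp hHerm.eigenvectorUnitary.2
    have hVU : star U * U = 1 := Matrix.mem_unitaryGroup_iff'.mp hHerm.eigenvectorUnitary.2
    calc D.charpoly = (U * diagonal μ * star U).charpoly := by rw [hspec, Unitary.conjStarAlgAut_apply]
      _ = (diagonal μ).charpoly := LRS.charpoly_conj' U (diagonal μ) (star U) hUV hVU
      _ = ∏ i, (Polynomial.X - C (μ i)) := LRS.charpoly_diag' μ
  -- X^m divides charpoly of D
  have hXm : (Polynomial.X : ℝ[X]) ^ m ∣ D.charpoly := by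
    rw [hcharD]
    have hsub : Finset.univ.filter (fun i => μ i = 0) ⊆ Finset.univ := Finset.filter_subset _ _
    have hdvd := Finset.prod_dvd_prod_of_subset _ _ (fun i => (Polynomial.X : ℝ[X]) - C (μ i)) hsub
    have heq : ∏ i ∈ Finset.univ.filter (fun i => μ i = 0), ((Polynomial.X : ℝ[X]) - C (μ i))
        = Polynomial.X ^ m := by
      calc ∏ i ∈ Finset.univ.filter (fun i => μ i = 0), ((Polynomial.X : ℝ[X]) - C (μ i))
          = ∏ _i ∈ Finset.univ.filter (fun i => μ i = 0), (Polynomial.X : ℝ[X]) :=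
            Finset.prod_congr rfl (fun i hi => by
              rw [(Finset.mem_filter.mp hi).2]; simp)
        _ = Polynomial.X ^ m := by rw [Finset.prod_const, hm, Fintype.card_subtype]
    rwa [heq] at hdvd
  -- relate to the integer charpoly
  set pB : ℤ[X] := B.charpoly with hpB
  set pR : ℝ[X] := pB.map (Int.castRingHom ℝ) with hpR
  have hpRcast : pR = (B.map (Int.cast : ℤ → ℝ)).charpoly := by
    have hcoe : (Int.cast : ℤ → ℝ) = ⇑(Int.castRingHom ℝ) := rfl
    rw [hpR, hpB, hcoe, Matrix.charpoly_map]
  have hcharshift : D.charpoly = pR.comp (Polynomial.X - C k) := by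
    rw [hDB, LRS.charpoly_add_smul_one, hpRcast]
  -- transfer divisibility through composition with X + C k
  have hdvd2 : ((Polynomial.X : ℝ[X]) - C (-k)) ^ m ∣ pR := by
    have h1 : (Polynomial.X : ℝ[X]) ^ m ∣ pR.comp (Polynomial.X - C k) := by rwa [← hcharshift]
    have h2 := map_dvd (eval₂RingHom (C : ℝ →+* ℝ[X]) (Polynomial.X + C k)) h1
    have h3 : (eval₂RingHom (C : ℝ →+* ℝ[X]) (Polynomial.X + C k)) ((Polynomial.X : ℝ[X]) ^ m)
        = (Polynomial.X + C k) ^ m := by simp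
    have h4 : (eval₂RingHom (C : ℝ →+* ℝ[X]) (Polynomial.X + C k)) (pR.comp (Polynomial.X - C k)) = pR := by
      show (pR.comp (Polynomial.X - C k)).comp (Polynomial.X + C k) = pR
      rw [Polynomial.comp_assoc]
      have : ((Polynomial.X : ℝ[X]) - C k).comp (Polynomial.X + C k) = Polynomial.X := by
        simp [Polynomial.sub_comp]
      rw [this, Polynomial.comp_X]
    rw [h3, h4] at h2
    have : (Polynomial.X : ℝ[X]) - C (-k) = Polynomial.X + C k := by rw [map_neg, sub_neg_eq_add]
    rwa [this]
  have hpR0 : pR ≠ 0 := by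
    rw [hpRcast]
    exact (Matrix.charpoly_monic _).ne_zero
  have hrm : m ≤ pR.rootMultiplicity (-k) := (Polynomial.le_rootMultiplicity_iff hpR0).mpr hdvd2
  -- the rational polynomial
  set pQ : ℚ[X] := pB.map (Int.castRingHom ℚ) with hpQ
  have hpQR : pR = pQ.map (algebraMap ℚ ℝ) := by
    have hcomp : (algebraMap ℚ ℝ).comp (Int.castRingHom ℚ) = Int.castRingHom ℝ := by
      ext z; simp
    rw [hpR, hpQ, Polynomial.map_map, hcomp]
  have hpQmonic : pQ.Monic := (Matrix.charpoly_monic B).map _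
  have hpQ0 : pQ ≠ 0 := hpQmonic.ne_zero
  have hpQdeg : pQ.natDegree = n := by
    rw [hpQ, (Matrix.charpoly_monic B).natDegree_map, Matrix.charpoly_natDegree_eq_dim, hcardι]
  -- m ≥ 1 so -k is a root of pR
  have hm1 : 1 ≤ m := by omega
  have hroot : pR.IsRoot (-k) := by
    have := Polynomial.rootMultiplicity_pos hpR0 (x := -k)
    rw [← this]
    omega
  -- -k is integral over ℚ (indeed over ℤ)
  have hintZ : IsIntegral ℤ (-k : ℝ) := by
    refine ⟨pB, Matrix.charpoly_monic B, ?_⟩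
    rw [← Polynomial.eval_map]
    exact hroot
  have hintQ : IsIntegral ℚ (-k : ℝ) := hintZ.tower_top
  -- minimal polynomial has degree 1
  have hμdeg1 : (minpoly ℚ (-k : ℝ)).natDegree = 1 := by
    have hkey := LRS.rm_minpoly_le (-k) hintQ pQ.natDegree pQ hpQ0 le_rfl
    rw [← hpQR] at hkey
    have hμpos : 0 < (minpoly ℚ (-k : ℝ)).natDegree := minpoly.natDegree_pos hintQ
    by_contra hne
    have h2le : 2 ≤ (minpoly ℚ (-k : ℝ)).natDegree := by omega
    have : m * 2 ≤ pR.rootMultiplicity (-k) * (minpoly ℚ (-k : ℝ)).natDegree :=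
      Nat.mul_le_mul hrm h2le
    rw [hpQdeg] at hkey
    omega
  -- hence -k is rational
  obtain ⟨q, hq⟩ := (minpoly.natDegree_eq_one_iff).mp hμdeg1
  -- q is integral over ℤ hence an integer
  have hqint : IsIntegral ℤ q := by
    rw [← isIntegral_algebraMap_iff (algebraMap ℚ ℝ).injective, hq]
    exact hintZ
  obtain ⟨z, hz⟩ := IsIntegrallyClosed.isIntegral_iff.mp hqint
  have hzR : (z : ℝ) = -k := by
    rw [← hq, ← hz]
    simp
  -- conclude
  have hklt : (1:ℝ) < k := by
    rw [hk]
    rw [lt_div_iff₀ hδ2]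
    nlinarith
  have hzlt : (z : ℝ) < -1 := by rw [hzR]; linarith
  have hzint : z < -1 := by exact_mod_cast hzlt
  have hzle : z ≤ -2 := by omega
  refine ⟨-2 * z - 1, ⟨-z - 1, by ring⟩, by omega, ?_⟩
  have hz2 : (z : ℝ) * (δ ^ 2 - 1) = -δ ^ 2 := by
    rw [hzR, hk]; field_simp
  rw [div_eq_iff hc0]
  push_cast
  linear_combination (2 : ℝ) * hz2
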